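/- Let Γ_{p,q,r} = G_{p,q} ∪ G_{p,r} be the union of the complete graph on {x_1,...,x_p,y_1,...,y_q} and the complete graph on {x_1,...,x_p,z_1,...,z_r}. Then the toric (defining) ideal J of the Rees algebra of the vertex cover ideal I_{Γ_{p,q,r}} has a Gröbner basis, with respect to the described order, whose initial ideal is generated by the quadratic monomials x_i φ_i (1 ≤ i ≤ p), y_j ψ_j^k (1 ≤ j < q, 1 ≤ k ≤ r), z_k ψ_j^k (1 ≤ j ≤ q, 1 < k ≤ r), and ψ_{j_1}^{k_2} ψ_{j_2}^{k_1} (j_1 < j_2, k_1 < k_2). In particular J satisfies the x-condition. -/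

import Mathlib

open MvPolynomial Finsupp

namespace Paper

variable (K : Type) [Field K] (n : ℕ)

/-- The polynomial ring `S = K[x_1,…,x_n]`. -/
abbrev S := MvPolynomial (Fin n) K

/-- An ideal of `S` is generated by linear forms. -/
def GenByLinearForms (I : Ideal (S K n)) : Prop :=
  ∃ L : Set (S K n), (∀ f ∈ L, f ∈ homogeneousSubmodule (Fin n) K 1) ∧ I = Ideal.span L

variable {M : Type} [AddCommGroup M] [Module (S K n) M]

/-- `M` has linear quotients with respect to the system of generators `f`. -/
def HasLinearQuotientsWith {s : ℕ} (f : Fin s → M) : Prop :=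
  (Submodule.span (S K n) (Set.range f) = ⊤) ∧
  ∀ j : Fin s,
    ((Submodule.span (S K n) (f '' {i | i < j})).colon (Submodule.span (S K n) {f j}) = ⊤ ∨
      GenByLinearForms K n
        ((Submodule.span (S K n) (f '' {i | i < j})).colon (Submodule.span (S K n) {f j})))

/-- A minimal system of generators. -/
def IsMinimalGenSys {s : ℕ} (f : Fin s → M) : Prop :=
  Submodule.span (S K n) (Set.range f) = ⊤ ∧
  ∀ j, f j ∉ Submodule.span (S K n) (f '' {i | i ≠ j})

/-- The degree `t` component of the graded free module `⊕ S(-a i)`. -/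
def freeComp {r : ℕ} (a : Fin r → ℕ) (t : ℕ) :
    Submodule K (Fin r →₀ S K n) where
  carrier := {v | ∀ i, v i ∈ homogeneousSubmodule (Fin n) K (t - a i) ∧ (t < a i → v i = 0)}
  add_mem' := by
    intro v w hv hw i
    refine ⟨Submodule.add_mem _ (hv i).1 (hw i).1, fun h => ?_⟩
    simp [Finsupp.add_apply, (hv i).2 h, (hw i).2 h]
  zero_mem' := by
    intro i
    simp
  smul_mem' := by
    intro c v hv i
    refine ⟨Submodule.smul_mem _ c (hv i).1, fun h => ?_⟩
    simp [Finsupp.smul_apply, (hv i).2 h]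

variable [Module K M] [IsScalarTower K (S K n) M]

/-- A graded free resolution of the graded module `M` with graded pieces `ℳ`. -/
structure GradedFreeResolution (ℳ : ℕ → Submodule K M) where
  rk : ℕ → ℕ
  deg : (i : ℕ) → Fin (rk i) → ℕ
  d : (i : ℕ) → ((Fin (rk (i+1)) →₀ S K n) →ₗ[S K n] (Fin (rk i) →₀ S K n))
  aug : (Fin (rk 0) →₀ S K n) →ₗ[S K n] M
  aug_surj : Function.Surjective aug
  exact_aug : Function.Exact (d 0) aug
  exact : ∀ i, Function.Exact (d (i+1)) (d i)
  aug_graded : ∀ t, ∀ v ∈ freeComp K n (deg 0) t, aug v ∈ ℳ t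
  d_graded : ∀ i t, ∀ v ∈ freeComp K n (deg (i+1)) t, d i v ∈ freeComp K n (deg i) t

/-- `M` (with grading `ℳ`) has a `d₀`-linear resolution. -/
def HasLinearResolution (ℳ : ℕ → Submodule K M) (d₀ : ℕ) : Prop :=
  ∃ R : GradedFreeResolution K n ℳ, ∀ i k, R.deg i k = d₀ + i

/-- The submodule of `M` generated by the homogeneous elements of degree `j`. -/
noncomputable def degreeSubmodule (ℳ : ℕ → Submodule K M) (j : ℕ) : Submodule (S K n) M :=
  Submodule.span (S K n) (ℳ j : Set M)

/-- The grading induced on a submodule. -/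
noncomputable def subGrading (ℳ : ℕ → Submodule K M) (N : Submodule (S K n) M) : ℕ → Submodule K N :=
  fun t => (ℳ t).comap ((N.subtype).restrictScalars K)

/-- `M` is componentwise linear. -/
def ComponentwiseLinear (ℳ : ℕ → Submodule K M) : Prop :=
  ∀ j : ℕ, HasLinearResolution K n (subGrading K n ℳ (degreeSubmodule K n ℳ j)) j

/-- `ℳ` is a grading of the `S`-module `M`. -/
structure IsGrading (ℳ : ℕ → Submodule K M) : Prop where
  internal : DirectSum.IsInternal (fun i => ℳ i)
  smul_mem : ∀ i j : ℕ, ∀ p ∈ homogeneousSubmodule (Fin n) K i, ∀ x ∈ ℳ j, p • x ∈ ℳ (i + j)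

/-- The graded maximal ideal of `S`. -/
noncomputable def maxIdeal : Ideal (S K n) := Ideal.span (Set.range X)

/-- Minimality of a graded free resolution. -/
def IsMinimalRes {ℳ : ℕ → Submodule K M} (R : GradedFreeResolution K n ℳ) : Prop :=
  (∀ i, LinearMap.range (R.d i) ≤ (maxIdeal K n) • (⊤ : Submodule (S K n) (Fin (R.rk i) →₀ S K n))) ∧
  (LinearMap.ker R.aug ≤ (maxIdeal K n) • (⊤ : Submodule (S K n) (Fin (R.rk 0) →₀ S K n)))

/-- The graded Betti numbers read off from a resolution. -/
def betti {ℳ : ℕ → Submodule K M} (R : GradedFreeResolution K n ℳ) (i j : ℕ) : ℕ :=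
  (Finset.univ.filter (fun k => R.deg i k = j)).card

/-- `g` is an `M`-regular sequence of elements of the graded maximal ideal. -/
def IsRegularSeq {t : ℕ} (g : Fin t → S K n) : Prop :=
  (∀ i, g i ∈ maxIdeal K n) ∧
  (∀ i : Fin t, ∀ x : M,
      g i • x ∈ (Ideal.span (g '' {i' | i' < i})) • (⊤ : Submodule (S K n) M) →
        x ∈ (Ideal.span (g '' {i' | i' < i})) • (⊤ : Submodule (S K n) M)) ∧
  (Ideal.span (Set.range g)) • (⊤ : Submodule (S K n) M) ≠ ⊤

/-- The depth of `M` over `S`. -/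
noncomputable def depth : ℕ∞ :=
  sSup ((fun t : ℕ => (t : ℕ∞)) ''
    {t : ℕ | ∃ g : Fin t → S K n, IsRegularSeq K n (M := M) g})

end Paper

section MonOrd

open MvPolynomial

variable {K : Type} [Field K] {σ : Type*}

/-- The leading exponent of a polynomial with respect to a monomial order. -/
noncomputable def leadExp (m : MonomialOrder σ) (p : MvPolynomial σ K) : σ →₀ ℕ :=
  m.toSyn.symm (p.support.sup (fun c => m.toSyn c))

/-- The initial ideal of `J` with respect to a monomial order. -/
noncomputable def inIdeal (m : MonomialOrder σ) (J : Ideal (MvPolynomial σ K)) :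
    Ideal (MvPolynomial σ K) :=
  Ideal.span ((fun p => monomial (leadExp m p) (1 : K)) '' {p | p ∈ J ∧ p ≠ 0})

variable {A B : Type*}

/-- The restriction of an exponent vector to the first block of variables. -/
noncomputable def xPart (c : (A ⊕ B) →₀ ℕ) : A →₀ ℕ :=
  Finsupp.comapDomain Sum.inl c Sum.inl_injective.injOn

/-- The restriction of an exponent vector to the second block of variables. -/
noncomputable def yPart (c : (A ⊕ B) →₀ ℕ) : B →₀ ℕ :=
  Finsupp.comapDomain Sum.inr c Sum.inr_injective.injOn

/-- `ord` compares the `y`-part first (via `ordY`) and breaks ties using the `x`-part. -/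
def ComparesYFirst (ord : MonomialOrder (A ⊕ B)) (ordY : MonomialOrder B)
    (ordX : MonomialOrder A) : Prop :=
  ∀ c d : (A ⊕ B) →₀ ℕ,
    ord.toSyn c < ord.toSyn d ↔
      (ordY.toSyn (yPart c) < ordY.toSyn (yPart d) ∨
        (yPart c = yPart d ∧ ordX.toSyn (xPart c) < ordX.toSyn (xPart d)))

/-- The x-condition: the initial ideal of `J` is generated by monomials involving
at most one `x`-variable, with exponent at most 1. -/
def XCondition [Fintype A] (ord : MonomialOrder (A ⊕ B)) (J : Ideal (MvPolynomial (A ⊕ B) K)) :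
    Prop :=
  ∃ D : Set ((A ⊕ B) →₀ ℕ), (∀ c ∈ D, (∑ i : A, c (Sum.inl i)) ≤ 1) ∧
    inIdeal ord J = Ideal.span ((fun c => monomial c (1 : K)) '' D)

/-- Lexicographic comparison of exponent vectors, where `prio j i` means that variable `j`
has strictly higher priority than `i`. -/
def lexLt (prio : A → A → Prop) (a b : A →₀ ℕ) : Prop :=
  ∃ i, a i < b i ∧ ∀ j, prio j i → a j = b j

end MonOrd

namespace Paper

open MvPolynomial Finsupp

variable (K : Type) [Field K] (p q r : ℕ)

/-- The vertices of the biclique graph `Γ_{p,q,r}`: `x_1,…,x_p, y_1,…,y_q, z_1,…,z_r`. -/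
abbrev σB := Fin p ⊕ (Fin q ⊕ Fin r)

/-- The variables `φ_1,…,φ_p, ψ_1^1,…,ψ_q^r` of the Rees presentation. -/
abbrev σφψ := Fin p ⊕ (Fin q × Fin r)

/-- The polynomial ring `S` on the vertices of `Γ_{p,q,r}`. -/
abbrev SB := MvPolynomial (σB p q r) K

/-- The presentation ring `T` of the Rees algebra. -/
abbrev TB := MvPolynomial (σB p q r ⊕ σφψ p q r) K

/-- The vertex cover generator `g_i = (x/x_i)·y·z`. -/
noncomputable def gB (i : Fin p) : SB K p q r :=
  ((Finset.univ.erase i).prod fun i' => X (Sum.inl i')) *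
  ((Finset.univ.prod fun j : Fin q => X (Sum.inr (Sum.inl j))) *
    (Finset.univ.prod fun k : Fin r => X (Sum.inr (Sum.inr k))))

/-- The vertex cover generator `f_j^k = x·(y/y_j)·(z/z_k)`. -/
noncomputable def fB (jk : Fin q × Fin r) : SB K p q r :=
  (Finset.univ.prod fun i : Fin p => X (Sum.inl i)) *
  (((Finset.univ.erase jk.1).prod fun j' => X (Sum.inr (Sum.inl j'))) *
    ((Finset.univ.erase jk.2).prod fun k' => X (Sum.inr (Sum.inr k'))))

/-- The presentation `π : T → R(I_{Γ_{p,q,r}}) ⊆ S[t]` of the Rees algebra. -/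
noncomputable def πB : TB K p q r →ₐ[K] Polynomial (SB K p q r) :=
  aeval (Sum.elim (fun v => Polynomial.C (X v))
    (Sum.elim (fun i => Polynomial.C (gB K p q r i) * Polynomial.X)
      (fun jk => Polynomial.C (fB K p q r jk) * Polynomial.X)))

/-- The toric ideal `J_{Γ_{p,q,r}}`. -/
noncomputable def JB : Ideal (TB K p q r) := RingHom.ker (πB K p q r).toRingHom

/-- Priority for the lexicographic order
`φ_1 > … > φ_p > ψ_1^r > … > ψ_1^1 > ψ_2^r > … > ψ_q^1`. -/
def prioPhiPsi : σφψ p q r → σφψ p q r → Prop := fun v w =>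
  match v, w with
  | .inl a, .inl b => a < b
  | .inl _, .inr _ => True
  | .inr _, .inl _ => False
  | .inr jk, .inr jk' => jk.1 < jk'.1 ∨ (jk.1 = jk'.1 ∧ jk'.2 < jk.2)

/-- Priority for the lexicographic order `y_q > … > y_1 > z_1 > … > z_r > x_p > … > x_1`. -/
def prioXYZ : σB p q r → σB p q r → Prop := fun v w =>
  match v, w with
  | .inr (.inl j), .inr (.inl j') => j' < j
  | .inr (.inl _), .inr (.inr _) => True
  | .inr (.inl _), .inl _ => True
  | .inr (.inr k), .inr (.inr k') => k < k'
  | .inr (.inr _), .inl _ => True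
  | .inr (.inr _), .inr (.inl _) => False
  | .inl i, .inl i' => i' < i
  | .inl _, _ => False

/-! ### Auxiliary development for Statement 16 -/

section St16Aux

variable (K : Type) [Field K] (p q r : ℕ)

/-- The `S`-exponent vector of the image of each variable of `T`, as a function. -/
def wfun : (σB p q r ⊕ σφψ p q r) → σB p q r → ℕ
  | .inl w, v => if v = w then 1 else 0
  | .inr (.inl i), .inl i' => if i' = i then 0 else 1
  | .inr (.inl _), .inr _ => 1
  | .inr (.inr _), .inl _ => 1
  | .inr (.inr jk), .inr (.inl j') => if j' = jk.1 then 0 else 1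
  | .inr (.inr jk), .inr (.inr k') => if k' = jk.2 then 0 else 1

/-- The `S`-exponent vector of the image of each variable of `T`. -/
noncomputable def W : (σB p q r ⊕ σφψ p q r) → (σB p q r →₀ ℕ)
  | .inl w => Finsupp.single w 1
  | .inr (.inl i) => (∑ i' ∈ Finset.univ.erase i, Finsupp.single (Sum.inl i') 1) +
      ((∑ j : Fin q, Finsupp.single (Sum.inr (Sum.inl j)) 1) +
        (∑ k : Fin r, Finsupp.single (Sum.inr (Sum.inr k)) 1))
  | .inr (.inr jk) => (∑ i : Fin p, Finsupp.single (Sum.inl i) 1) +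
      ((∑ j' ∈ Finset.univ.erase jk.1, Finsupp.single (Sum.inr (Sum.inl j')) 1) +
        (∑ k' ∈ Finset.univ.erase jk.2, Finsupp.single (Sum.inr (Sum.inr k')) 1))

/-- The `t`-degree of the image of each variable of `T`. -/
def τ : (σB p q r ⊕ σφψ p q r) → ℕ
  | .inl _ => 0
  | .inr _ => 1

lemma W_apply (u : σB p q r ⊕ σφψ p q r) (v : σB p q r) :
    W p q r u v = wfun p q r u v := by
  obtain (w | (i | jk)) := u <;> obtain (a | (b | c)) := v <;>
    simp [W, wfun, Finsupp.single_apply, Finsupp.finset_sum_apply] <;>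
    simp [Finset.sum_ite_eq', eq_comm]

/-- The `S`-exponent of the image under `π` of a monomial of `T` with exponent `e`. -/
noncomputable def sExp (e : (σB p q r ⊕ σφψ p q r) →₀ ℕ) : σB p q r →₀ ℕ :=
  e.sum fun u n => n • W p q r u

/-- The `t`-degree of the image under `π` of a monomial of `T` with exponent `e`. -/
def tdeg (e : (σB p q r ⊕ σφψ p q r) →₀ ℕ) : ℕ :=
  e.sum fun u n => n * τ p q r u

lemma sExp_add (e e' : (σB p q r ⊕ σφψ p q r) →₀ ℕ) :
    sExp p q r (e + e') = sExp p q r e + sExp p q r e' :=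
  Finsupp.sum_add_index' (fun u => zero_smul ℕ _) fun u m n => add_smul m n _

lemma tdeg_add (e e' : (σB p q r ⊕ σφψ p q r) →₀ ℕ) :
    tdeg p q r (e + e') = tdeg p q r e + tdeg p q r e' :=
  Finsupp.sum_add_index' (fun u => zero_mul _) fun u m n => add_mul m n _

lemma sExp_single (u : σB p q r ⊕ σφψ p q r) (n : ℕ) :
    sExp p q r (Finsupp.single u n) = n • W p q r u :=
  Finsupp.sum_single_index (zero_smul ℕ _)

lemma tdeg_single (u : σB p q r ⊕ σφψ p q r) (n : ℕ) :
    tdeg p q r (Finsupp.single u n) = n * τ p q r u :=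
  Finsupp.sum_single_index (zero_mul _)

lemma sExp_apply (e : (σB p q r ⊕ σφψ p q r) →₀ ℕ) (v : σB p q r) :
    sExp p q r e v = ∑ u : σB p q r ⊕ σφψ p q r, e u * wfun p q r u v := by
  rw [sExp, Finsupp.sum_apply, Finsupp.sum_fintype]
  · exact Finset.sum_congr rfl fun u _ => by rw [Finsupp.smul_apply, smul_eq_mul, W_apply]
  · intro u; simp

lemma tdeg_eq_sum (e : (σB p q r ⊕ σφψ p q r) →₀ ℕ) :
    tdeg p q r e = ∑ u : σB p q r ⊕ σφψ p q r, e u * τ p q r u := by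
  rw [tdeg, Finsupp.sum_fintype]; intro u; simp

lemma prodX_comp {α : Type} (s : Finset α) (f : α → σB p q r) :
    (∏ v ∈ s, (X (f v) : SB K p q r)) =
      monomial (∑ v ∈ s, Finsupp.single (f v) 1) 1 := by
  classical
  induction s using Finset.cons_induction with
  | empty => simp
  | cons a s ha ih =>
      rw [Finset.prod_cons, Finset.sum_cons, ih, X, monomial_mul, one_mul]

lemma gB_eq (i : Fin p) :
    gB K p q r i = monomial (W p q r (Sum.inr (Sum.inl i))) 1 := by
  rw [gB, prodX_comp, prodX_comp, prodX_comp, monomial_mul, monomial_mul, one_mul, one_mul, W]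

lemma fB_eq (jk : Fin q × Fin r) :
    fB K p q r jk = monomial (W p q r (Sum.inr (Sum.inr jk))) 1 := by
  rw [fB, prodX_comp, prodX_comp, prodX_comp, monomial_mul, monomial_mul, one_mul, one_mul, W]

lemma πB_X (u : σB p q r ⊕ σφψ p q r) :
    πB K p q r (X u) =
      Polynomial.monomial (τ p q r u) (monomial (W p q r u) (1 : K)) := by
  obtain (w | (i | jk)) := u
  · rw [πB, aeval_X]
    simp only [Sum.elim_inl, τ]
    rw [show (X w : SB K p q r) = monomial (W p q r (Sum.inl w)) 1 from ?_]
    · rw [Polynomial.monomial_zero_left]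
    · rw [W, ← X_pow_eq_monomial (R := K), pow_one]
  · rw [πB, aeval_X]
    simp only [Sum.elim_inr, Sum.elim_inl, τ]
    rw [gB_eq, ← Polynomial.C_mul_X_eq_monomial]
  · rw [πB, aeval_X]
    simp only [Sum.elim_inr, τ]
    rw [fB_eq, ← Polynomial.C_mul_X_eq_monomial]

lemma πB_monomial (e : (σB p q r ⊕ σφψ p q r) →₀ ℕ) (c : K) :
    πB K p q r (monomial e c) =
      Polynomial.monomial (tdeg p q r e) (monomial (sExp p q r e) c) := by
  induction e using Finsupp.induction with
  | zero =>
      rw [show tdeg p q r 0 = 0 from Finsupp.sum_zero_index,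
        show sExp p q r 0 = 0 from Finsupp.sum_zero_index]
      rw [monomial_zero', πB]
      simp [algebraMap_eq]
  | single_add u n e hu hn ih =>
      rw [show monomial (Finsupp.single u n + e) c
            = monomial (Finsupp.single u n) 1 * monomial e c by rw [monomial_mul, one_mul],
        map_mul, ih, sExp_add, tdeg_add, sExp_single, tdeg_single]
      rw [show monomial (Finsupp.single u n) (1:K) = (X u)^n by
            rw [X_pow_eq_monomial], map_pow, πB_X, Polynomial.monomial_pow,
        monomial_pow, one_pow, Polynomial.monomial_mul_monomial, monomial_mul, one_mul,
        mul_comm (τ p q r u) n]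

end St16Aux
section St16Lead

variable {K : Type} [Field K] {σ' : Type*} (m : MonomialOrder σ')

lemma leadExp_mem_support {f : MvPolynomial σ' K} (hf : f ≠ 0) :
    leadExp m f ∈ f.support := by
  obtain ⟨c, hc, hce⟩ := Finset.exists_mem_eq_sup f.support
    (MvPolynomial.support_nonempty.mpr hf) (fun c => m.toSyn c)
  rw [leadExp, hce, AddEquiv.symm_apply_apply]
  exact hc

lemma le_toSyn_leadExp {f : MvPolynomial σ' K} {c : σ' →₀ ℕ} (hc : c ∈ f.support) :
    m.toSyn c ≤ m.toSyn (leadExp m f) := by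
  rw [leadExp, AddEquiv.apply_symm_apply]
  exact Finset.le_sup hc

lemma leadExp_binomial {c d : σ' →₀ ℕ} (h : m.toSyn d < m.toSyn c) :
    leadExp m (monomial c (1 : K) - monomial d 1) = c := by
  classical
  have hcd : d ≠ c := fun hdc => absurd (hdc ▸ h) (lt_irrefl _)
  set f := monomial c (1 : K) - monomial d 1 with hfdef
  have hcf : c ∈ f.support := by
    rw [MvPolynomial.mem_support_iff, hfdef, MvPolynomial.coeff_sub,
      MvPolynomial.coeff_monomial, MvPolynomial.coeff_monomial, if_pos rfl, if_neg hcd]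
    simp
  have hsub : f.support ⊆ {c, d} := by
    intro e he
    have := MvPolynomial.support_sub σ' (monomial c (1:K)) (monomial d 1) he
    simp only [Finset.mem_union] at this
    rcases this with h1 | h1
    · exact Finset.mem_insert.mpr (Or.inl (Finset.mem_singleton.mp
        (MvPolynomial.support_monomial_subset h1)))
    · exact Finset.mem_insert.mpr (Or.inr (MvPolynomial.support_monomial_subset h1))
  have : f.support.sup (fun e => m.toSyn e) = m.toSyn c := by
    apply le_antisymm
    · apply Finset.sup_le
      intro e he
      rcases Finset.mem_insert.mp (hsub he) with rfl | he'
      · exact le_refl _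
      · rw [Finset.mem_singleton.mp he']; exact le_of_lt h
    · exact Finset.le_sup hcf
  rw [leadExp, this, AddEquiv.symm_apply_apply]

end St16Lead

section St16Gens

variable (K : Type) [Field K] (p q r : ℕ) (yL : Fin q) (z0 : Fin r)

/-- Exponent `x_i φ_i`. -/
noncomputable def cX (i : Fin p) : (σB p q r ⊕ σφψ p q r) →₀ ℕ :=
  Finsupp.single (Sum.inl (Sum.inl i)) 1 + Finsupp.single (Sum.inr (Sum.inl i)) 1

/-- Exponent `y_L z_0 ψ_{L,0}`. -/
noncomputable def dX : (σB p q r ⊕ σφψ p q r) →₀ ℕ :=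
  Finsupp.single (Sum.inl (Sum.inr (Sum.inl yL))) 1 +
    (Finsupp.single (Sum.inl (Sum.inr (Sum.inr z0))) 1 +
      Finsupp.single (Sum.inr (Sum.inr (yL, z0))) 1)

/-- Exponent `y_j ψ_{j,k}`. -/
noncomputable def cY (j : Fin q) (k : Fin r) : (σB p q r ⊕ σφψ p q r) →₀ ℕ :=
  Finsupp.single (Sum.inl (Sum.inr (Sum.inl j))) 1 + Finsupp.single (Sum.inr (Sum.inr (j, k))) 1

/-- Exponent `y_L ψ_{L,k}`. -/
noncomputable def dY (k : Fin r) : (σB p q r ⊕ σφψ p q r) →₀ ℕ :=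
  Finsupp.single (Sum.inl (Sum.inr (Sum.inl yL))) 1 + Finsupp.single (Sum.inr (Sum.inr (yL, k))) 1

/-- Exponent `z_k ψ_{j,k}`. -/
noncomputable def cZ (j : Fin q) (k : Fin r) : (σB p q r ⊕ σφψ p q r) →₀ ℕ :=
  Finsupp.single (Sum.inl (Sum.inr (Sum.inr k))) 1 + Finsupp.single (Sum.inr (Sum.inr (j, k))) 1

/-- Exponent `z_0 ψ_{j,0}`. -/
noncomputable def dZ (j : Fin q) : (σB p q r ⊕ σφψ p q r) →₀ ℕ :=
  Finsupp.single (Sum.inl (Sum.inr (Sum.inr z0))) 1 + Finsupp.single (Sum.inr (Sum.inr (j, z0))) 1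

/-- Exponent `ψ_{j₁,k₂} ψ_{j₂,k₁}`. -/
noncomputable def cP (j₁ j₂ : Fin q) (k₁ k₂ : Fin r) : (σB p q r ⊕ σφψ p q r) →₀ ℕ :=
  Finsupp.single (Sum.inr (Sum.inr (j₁, k₂))) 1 + Finsupp.single (Sum.inr (Sum.inr (j₂, k₁))) 1

/-- Exponent `ψ_{j₁,k₁} ψ_{j₂,k₂}`. -/
noncomputable def dP (j₁ j₂ : Fin q) (k₁ k₂ : Fin r) : (σB p q r ⊕ σφψ p q r) →₀ ℕ :=
  Finsupp.single (Sum.inr (Sum.inr (j₁, k₁))) 1 + Finsupp.single (Sum.inr (Sum.inr (j₂, k₂))) 1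

lemma sExp_two (a b : σB p q r ⊕ σφψ p q r) :
    sExp p q r (Finsupp.single a 1 + Finsupp.single b 1) = W p q r a + W p q r b := by
  rw [sExp_add, sExp_single, sExp_single, one_smul, one_smul]

lemma sExp_three (a b c : σB p q r ⊕ σφψ p q r) :
    sExp p q r (Finsupp.single a 1 + (Finsupp.single b 1 + Finsupp.single c 1)) =
      W p q r a + (W p q r b + W p q r c) := by
  rw [sExp_add, sExp_two, sExp_single, one_smul]

lemma tdeg_two (a b : σB p q r ⊕ σφψ p q r) :
    tdeg p q r (Finsupp.single a 1 + Finsupp.single b 1) = τ p q r a + τ p q r b := by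
  rw [tdeg_add, tdeg_single, tdeg_single, one_mul, one_mul]

lemma tdeg_three (a b c : σB p q r ⊕ σφψ p q r) :
    tdeg p q r (Finsupp.single a 1 + (Finsupp.single b 1 + Finsupp.single c 1)) =
      τ p q r a + (τ p q r b + τ p q r c) := by
  rw [tdeg_add, tdeg_two, tdeg_single, one_mul]

lemma fiber_X (i : Fin p) :
    sExp p q r (cX p q r i) = sExp p q r (dX p q r yL z0) ∧
      tdeg p q r (cX p q r i) = tdeg p q r (dX p q r yL z0) := by
  constructor
  · rw [cX, dX, sExp_two, sExp_three]
    ext v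
    simp only [Finsupp.add_apply, W_apply]
    rcases v with a | (b | c) <;> simp [wfun] <;> split_ifs <;> omega
  · rw [cX, dX, tdeg_two, tdeg_three]; rfl

lemma fiber_Y (j : Fin q) (k : Fin r) :
    sExp p q r (cY p q r j k) = sExp p q r (dY p q r yL k) ∧
      tdeg p q r (cY p q r j k) = tdeg p q r (dY p q r yL k) := by
  constructor
  · rw [cY, dY, sExp_two, sExp_two]
    ext v
    simp only [Finsupp.add_apply, W_apply]
    rcases v with a | (b | c) <;> simp [wfun] <;> split_ifs <;> omega
  · rw [cY, dY, tdeg_two, tdeg_two]; rfl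

lemma fiber_Z (j : Fin q) (k : Fin r) :
    sExp p q r (cZ p q r j k) = sExp p q r (dZ p q r z0 j) ∧
      tdeg p q r (cZ p q r j k) = tdeg p q r (dZ p q r z0 j) := by
  constructor
  · rw [cZ, dZ, sExp_two, sExp_two]
    ext v
    simp only [Finsupp.add_apply, W_apply]
    rcases v with a | (b | c) <;> simp [wfun] <;> split_ifs <;> omega
  · rw [cZ, dZ, tdeg_two, tdeg_two]; rfl

lemma fiber_P (j₁ j₂ : Fin q) (k₁ k₂ : Fin r) :
    sExp p q r (cP p q r j₁ j₂ k₁ k₂) = sExp p q r (dP p q r j₁ j₂ k₁ k₂) ∧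
      tdeg p q r (cP p q r j₁ j₂ k₁ k₂) = tdeg p q r (dP p q r j₁ j₂ k₁ k₂) := by
  constructor
  · rw [cP, dP, sExp_two, sExp_two]
    ext v
    simp only [Finsupp.add_apply, W_apply]
    rcases v with a | (b | c) <;> simp [wfun] <;> split_ifs <;> omega
  · rw [cP, dP, tdeg_two, tdeg_two]; rfl

lemma mem_JB_of_fiber {c d : (σB p q r ⊕ σφψ p q r) →₀ ℕ}
    (h1 : sExp p q r c = sExp p q r d) (h2 : tdeg p q r c = tdeg p q r d) :
    (monomial c (1 : K) - monomial d 1 : TB K p q r) ∈ JB K p q r := by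
  have : πB K p q r (monomial c (1 : K) - monomial d 1) = 0 := by
    rw [map_sub, πB_monomial, πB_monomial, h1, h2, sub_self]
  exact this

lemma exists_partner {f : TB K p q r} (hf : f ∈ JB K p q r)
    {e0 : (σB p q r ⊕ σφψ p q r) →₀ ℕ} (he0 : e0 ∈ f.support) :
    ∃ e' ∈ f.support, e' ≠ e0 ∧ sExp p q r e' = sExp p q r e0 ∧
      tdeg p q r e' = tdeg p q r e0 := by
  by_contra hcon
  push_neg at hcon
  have h0 : πB K p q r f = 0 := hf
  have hsum : πB K p q r f = ∑ e ∈ f.support,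
      Polynomial.monomial (tdeg p q r e) (monomial (sExp p q r e) (MvPolynomial.coeff e f)) := by
    conv_lhs => rw [← MvPolynomial.support_sum_monomial_coeff f]
    rw [map_sum]
    exact Finset.sum_congr rfl fun e _ => πB_monomial K p q r e _
  have hco : MvPolynomial.coeff (sExp p q r e0)
      (Polynomial.coeff (πB K p q r f) (tdeg p q r e0)) = MvPolynomial.coeff e0 f := by
    rw [hsum, Polynomial.finset_sum_coeff]
    rw [Finset.sum_congr rfl (fun e _ => Polynomial.coeff_monomial), MvPolynomial.coeff_sum,
      Finset.sum_congr rfl (fun e _ => by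
        rw [apply_ite (MvPolynomial.coeff (sExp p q r e0)), MvPolynomial.coeff_zero])]
    rw [Finset.sum_eq_single_of_mem e0 he0]
    · rw [if_pos rfl, MvPolynomial.coeff_monomial, if_pos rfl]
    · intro e he hne
      by_cases h1 : tdeg p q r e = tdeg p q r e0
      · rw [if_pos h1, MvPolynomial.coeff_monomial, if_neg]
        intro h2
        exact (hcon e he hne h2 h1).elim
      · rw [if_neg h1]
  rw [h0] at hco
  simp only [Polynomial.coeff_zero, MvPolynomial.coeff_zero] at hco
  exact MvPolynomial.mem_support_iff.mp he0 hco.symm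

end St16Gens
section St16Ord

variable {p q r : ℕ}
variable (ord : MonomialOrder (σB p q r ⊕ σφψ p q r))
variable (hord : ∀ c d : (σB p q r ⊕ σφψ p q r) →₀ ℕ,
      ord.toSyn c < ord.toSyn d ↔
        (lexLt (prioPhiPsi p q r) (yPart c) (yPart d) ∨
          (yPart c = yPart d ∧ lexLt (prioXYZ p q r) (xPart c) (xPart d))))
include hord

set_option maxRecDepth 10000 in
lemma lt_X (yL : Fin q) (z0 : Fin r) (i : Fin p) :
    ord.toSyn (dX p q r yL z0) < ord.toSyn (cX p q r i) := by
  rw [hord]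
  left
  refine ⟨Sum.inl i, ?_, ?_⟩
  · simp [yPart, Finsupp.comapDomain_apply, cX, dX, Finsupp.add_apply, Finsupp.single_apply]
  · rintro (b | jk) hw
    · have hb : b < i := hw
      simp only [yPart, Finsupp.comapDomain_apply, cX, dX, Finsupp.add_apply,
        Finsupp.single_apply]
      simp [Fin.ext_iff] at hb ⊢
      exact fun h => ne_of_gt hb (Fin.ext h)
    · exact hw.elim

set_option maxRecDepth 10000 in
lemma lt_Y (yL : Fin q) (j : Fin q) (k : Fin r) (hj : j < yL) :
    ord.toSyn (dY p q r yL k) < ord.toSyn (cY p q r j k) := by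
  rw [hord]
  left
  refine ⟨Sum.inr (j, k), ?_, ?_⟩
  · simp only [yPart, Finsupp.comapDomain_apply, cY, dY, Finsupp.add_apply, Finsupp.single_apply]
    simp [Prod.ext_iff, Fin.ext_iff]
    first | omega | (split_ifs <;> omega)
  · rintro (b | ⟨j', k'⟩) hw
    · simp [yPart, Finsupp.comapDomain_apply, cX, dX, cY, dY, cZ, dZ, cP, dP,
        Finsupp.add_apply, Finsupp.single_apply]
    · have hb : j' < j ∨ (j' = j ∧ k < k') := hw
      simp only [yPart, Finsupp.comapDomain_apply, cY, dY, Finsupp.add_apply,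
        Finsupp.single_apply]
      simp [Prod.ext_iff, Fin.ext_iff] at hb ⊢ <;> split_ifs <;> omega

set_option maxRecDepth 10000 in
lemma lt_Z (z0 : Fin r) (j : Fin q) (k : Fin r) (hk : z0 < k) :
    ord.toSyn (dZ p q r z0 j) < ord.toSyn (cZ p q r j k) := by
  rw [hord]
  left
  refine ⟨Sum.inr (j, k), ?_, ?_⟩
  · simp only [yPart, Finsupp.comapDomain_apply, cZ, dZ, Finsupp.add_apply, Finsupp.single_apply]
    simp [Prod.ext_iff, Fin.ext_iff]
    first | omega | (split_ifs <;> omega)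
  · rintro (b | ⟨j', k'⟩) hw
    · simp [yPart, Finsupp.comapDomain_apply, cX, dX, cY, dY, cZ, dZ, cP, dP,
        Finsupp.add_apply, Finsupp.single_apply]
    · have hb : j' < j ∨ (j' = j ∧ k < k') := hw
      simp only [yPart, Finsupp.comapDomain_apply, cZ, dZ, Finsupp.add_apply,
        Finsupp.single_apply]
      simp [Prod.ext_iff, Fin.ext_iff] at hb ⊢ <;> split_ifs <;> omega

set_option maxRecDepth 10000 in
lemma lt_P (j₁ j₂ : Fin q) (k₁ k₂ : Fin r) (h1 : j₁ < j₂) (h2 : k₁ < k₂) :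
    ord.toSyn (dP p q r j₁ j₂ k₁ k₂) < ord.toSyn (cP p q r j₁ j₂ k₁ k₂) := by
  rw [hord]
  left
  refine ⟨Sum.inr (j₁, k₂), ?_, ?_⟩
  · simp only [yPart, Finsupp.comapDomain_apply, cP, dP, Finsupp.add_apply, Finsupp.single_apply]
    simp [Prod.ext_iff, Fin.ext_iff]
    first | omega | (split_ifs <;> omega)
  · rintro (b | ⟨j', k'⟩) hw
    · simp [yPart, Finsupp.comapDomain_apply, cX, dX, cY, dY, cZ, dZ, cP, dP,
        Finsupp.add_apply, Finsupp.single_apply]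
    · have hb : j' < j₁ ∨ (j' = j₁ ∧ k₂ < k') := hw
      simp only [yPart, Finsupp.comapDomain_apply, cP, dP, Finsupp.add_apply,
        Finsupp.single_apply]
      simp [Prod.ext_iff, Fin.ext_iff] at hb ⊢ <;> split_ifs <;> omega

end St16Ord
section Staircase

variable {q r : ℕ}

/-- A matrix has staircase support: no strictly NE cell and strictly SW cell both nonzero. -/
def IsStair (b : Fin q → Fin r → ℕ) : Prop :=
  ∀ ⦃j1 j2 : Fin q⦄ ⦃k1 k2 : Fin r⦄, j1 < j2 → k1 < k2 → b j1 k2 = 0 ∨ b j2 k1 = 0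

lemma stair_corner (b : Fin q → Fin r → ℕ) (hb : IsStair b) (j0 : Fin q) (k0 : Fin r)
    (hj0 : ∀ j, j < j0 → ∑ k, b j k = 0) (hk0 : ∀ k, k < k0 → ∑ j, b j k = 0) :
    b j0 k0 = min (∑ k, b j0 k) (∑ j, b j k0) := by
  refine le_antisymm (le_min ?_ ?_) ?_
  · exact Finset.single_le_sum (fun k _ => Nat.zero_le _) (Finset.mem_univ k0)
  · exact Finset.single_le_sum (f := fun j => b j k0) (fun j _ => Nat.zero_le _)
      (Finset.mem_univ j0)
  · by_contra hlt
    push_neg at hlt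
    have hR : b j0 k0 < ∑ k, b j0 k := lt_of_lt_of_le hlt (min_le_left _ _)
    have hC : b j0 k0 < ∑ j, b j k0 := lt_of_lt_of_le hlt (min_le_right _ _)
    obtain ⟨k, hkne, hk⟩ : ∃ k, k ≠ k0 ∧ b j0 k ≠ 0 := by
      by_contra hall
      push_neg at hall
      have : ∑ k, b j0 k = b j0 k0 :=
        Finset.sum_eq_single_of_mem k0 (Finset.mem_univ _) (fun k _ hkk => hall k hkk)
      omega
    obtain ⟨j, hjne, hj⟩ : ∃ j, j ≠ j0 ∧ b j k0 ≠ 0 := by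
      by_contra hall
      push_neg at hall
      have : ∑ j, b j k0 = b j0 k0 :=
        Finset.sum_eq_single_of_mem j0 (Finset.mem_univ _) (fun j _ hjj => hall j hjj)
      omega
    have hkgt : k0 < k := by
      rcases lt_or_gt_of_ne hkne with h | h
      · exact absurd (Finset.sum_eq_zero_iff.mp (hk0 k h) j0 (Finset.mem_univ _)) hk
      · exact h
    have hjgt : j0 < j := by
      rcases lt_or_gt_of_ne hjne with h | h
      · exact absurd (Finset.sum_eq_zero_iff.mp (hj0 j h) k0 (Finset.mem_univ _)) hj
      · exact h
    rcases hb hjgt hkgt with h | h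
    exacts [hk h, hj h]

lemma stair_unique : ∀ (N : ℕ) (b b' : Fin q → Fin r → ℕ), (∑ j, ∑ k, b j k) = N →
    IsStair b → IsStair b' →
    (∀ j, ∑ k, b j k = ∑ k, b' j k) → (∀ k, ∑ j, b j k = ∑ j, b' j k) → b = b' := by
  intro N
  induction N using Nat.strong_induction_on with
  | _ N ih =>
  intro b b' hN hb hb' hR hC
  rcases Nat.eq_zero_or_pos N with rfl | hNpos
  · have hN' : ∑ j, ∑ k, b' j k = 0 := by
      rw [← Finset.sum_congr rfl fun j _ => hR j]
      exact hN
    funext j k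
    have h1 := Finset.sum_eq_zero_iff.mp
      (Finset.sum_eq_zero_iff.mp hN j (Finset.mem_univ _)) k (Finset.mem_univ _)
    have h2 := Finset.sum_eq_zero_iff.mp
      (Finset.sum_eq_zero_iff.mp hN' j (Finset.mem_univ _)) k (Finset.mem_univ _)
    rw [h1, h2]
  · -- pick the first nonzero row and column
    have hrow : ∃ j, ∑ k, b j k ≠ 0 := by
      by_contra hall
      push_neg at hall
      rw [Finset.sum_eq_zero (fun j _ => hall j)] at hN
      omega
    have hcol : ∃ k, ∑ j, b j k ≠ 0 := by
      by_contra hall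
      push_neg at hall
      have : ∑ j, ∑ k, b j k = 0 := by
        rw [Finset.sum_comm]
        exact Finset.sum_eq_zero (fun k _ => hall k)
      omega
    obtain ⟨jw, hjw⟩ := hrow
    obtain ⟨kw, hkw⟩ := hcol
    set sR : Finset (Fin q) := Finset.univ.filter (fun j => ∑ k, b j k ≠ 0) with hsR
    set sC : Finset (Fin r) := Finset.univ.filter (fun k => ∑ j, b j k ≠ 0) with hsC
    have hsRne : sR.Nonempty := ⟨jw, Finset.mem_filter.mpr ⟨Finset.mem_univ _, hjw⟩⟩
    have hsCne : sC.Nonempty := ⟨kw, Finset.mem_filter.mpr ⟨Finset.mem_univ _, hkw⟩⟩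
    set j0 := sR.min' hsRne with hj0def
    set k0 := sC.min' hsCne with hk0def
    have hj0mem : ∑ k, b j0 k ≠ 0 := (Finset.mem_filter.mp (sR.min'_mem hsRne)).2
    have hk0mem : ∑ j, b j k0 ≠ 0 := (Finset.mem_filter.mp (sC.min'_mem hsCne)).2
    have hj0min : ∀ j, j < j0 → ∑ k, b j k = 0 := by
      intro j hj
      by_contra h
      exact absurd (sR.min'_le j (Finset.mem_filter.mpr ⟨Finset.mem_univ _, h⟩))
        (not_le.mpr hj)
    have hk0min : ∀ k, k < k0 → ∑ j, b j k = 0 := by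
      intro k hk
      by_contra h
      exact absurd (sC.min'_le k (Finset.mem_filter.mpr ⟨Finset.mem_univ _, h⟩))
        (not_le.mpr hk)
    have hcor := stair_corner b hb j0 k0 hj0min hk0min
    have hcor' := stair_corner b' hb' j0 k0 (fun j hj => by rw [← hR j]; exact hj0min j hj)
      (fun k hk => by rw [← hC k]; exact hk0min k hk)
    have hbb' : b j0 k0 = b' j0 k0 := by
      rw [hcor, hcor', hR j0, hC k0]
    have hmpos : 0 < b j0 k0 := by
      rw [hcor]
      exact lt_min (Nat.pos_of_ne_zero hj0mem) (Nat.pos_of_ne_zero hk0mem)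
    -- the reduced matrices
    set c : Fin q → Fin r → ℕ := fun j k => if j = j0 ∧ k = k0 then 0 else b j k with hcdef
    set c' : Fin q → Fin r → ℕ := fun j k => if j = j0 ∧ k = k0 then 0 else b' j k with hc'def
    have hcle : ∀ j k, c j k ≤ b j k := by
      intro j k; simp only [hcdef]; split_ifs <;> omega
    have hc'le : ∀ j k, c' j k ≤ b' j k := by
      intro j k; simp only [hc'def]; split_ifs <;> omega
    have hcs : IsStair c := by
      intro j1 j2 k1 k2 h1 h2
      rcases hb h1 h2 with h | h
      · exact Or.inl (Nat.le_zero.mp (h ▸ hcle j1 k2))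
      · exact Or.inr (Nat.le_zero.mp (h ▸ hcle j2 k1))
    have hcs' : IsStair c' := by
      intro j1 j2 k1 k2 h1 h2
      rcases hb' h1 h2 with h | h
      · exact Or.inl (Nat.le_zero.mp (h ▸ hc'le j1 k2))
      · exact Or.inr (Nat.le_zero.mp (h ▸ hc'le j2 k1))
    -- row sums of the reduced matrices
    have hrow_ne : ∀ j, j ≠ j0 → ∀ k, c j k = b j k := by
      intro j hj k; simp only [hcdef]; rw [if_neg (by tauto)]
    have hrow_ne' : ∀ j, j ≠ j0 → ∀ k, c' j k = b' j k := by
      intro j hj k; simp only [hc'def]; rw [if_neg (by tauto)]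
    have hcol_ne : ∀ k, k ≠ k0 → ∀ j, c j k = b j k := by
      intro k hk j; simp only [hcdef]; rw [if_neg (by tauto)]
    have hcol_ne' : ∀ k, k ≠ k0 → ∀ j, c' j k = b' j k := by
      intro k hk j; simp only [hc'def]; rw [if_neg (by tauto)]
    have hrow0 : ∑ k, c j0 k + b j0 k0 = ∑ k, b j0 k := by
      have h1 : c j0 k0 = 0 := by simp [hcdef]
      have h2 : ∀ k ∈ Finset.univ.erase k0, c j0 k = b j0 k := fun k hk =>
        hcol_ne k (Finset.mem_erase.mp hk).1 j0
      have e1 : ∑ k, c j0 k = ∑ k ∈ Finset.univ.erase k0, b j0 k := by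
        rw [← Finset.sum_erase_add _ _ (Finset.mem_univ k0), h1, add_zero]
        exact Finset.sum_congr rfl h2
      rw [e1]
      exact Finset.sum_erase_add _ _ (Finset.mem_univ k0)
    have hrow0' : ∑ k, c' j0 k + b' j0 k0 = ∑ k, b' j0 k := by
      have h1 : c' j0 k0 = 0 := by simp [hc'def]
      have h2 : ∀ k ∈ Finset.univ.erase k0, c' j0 k = b' j0 k := fun k hk =>
        hcol_ne' k (Finset.mem_erase.mp hk).1 j0
      have e1 : ∑ k, c' j0 k = ∑ k ∈ Finset.univ.erase k0, b' j0 k := by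
        rw [← Finset.sum_erase_add _ _ (Finset.mem_univ k0), h1, add_zero]
        exact Finset.sum_congr rfl h2
      rw [e1]
      exact Finset.sum_erase_add _ _ (Finset.mem_univ k0)
    have hcol0 : ∑ j, c j k0 + b j0 k0 = ∑ j, b j k0 := by
      have h1 : c j0 k0 = 0 := by simp [hcdef]
      have h2 : ∀ j ∈ Finset.univ.erase j0, c j k0 = b j k0 := fun j hj =>
        hrow_ne j (Finset.mem_erase.mp hj).1 k0
      have e1 : ∑ j, c j k0 = ∑ j ∈ Finset.univ.erase j0, b j k0 := by
        rw [← Finset.sum_erase_add _ _ (Finset.mem_univ j0), h1, add_zero]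
        exact Finset.sum_congr rfl h2
      rw [e1]
      exact Finset.sum_erase_add _ _ (Finset.mem_univ j0)
    have hcol0' : ∑ j, c' j k0 + b' j0 k0 = ∑ j, b' j k0 := by
      have h1 : c' j0 k0 = 0 := by simp [hc'def]
      have h2 : ∀ j ∈ Finset.univ.erase j0, c' j k0 = b' j k0 := fun j hj =>
        hrow_ne' j (Finset.mem_erase.mp hj).1 k0
      have e1 : ∑ j, c' j k0 = ∑ j ∈ Finset.univ.erase j0, b' j k0 := by
        rw [← Finset.sum_erase_add _ _ (Finset.mem_univ j0), h1, add_zero]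
        exact Finset.sum_congr rfl h2
      rw [e1]
      exact Finset.sum_erase_add _ _ (Finset.mem_univ j0)
    have hRc : ∀ j, ∑ k, c j k = ∑ k, c' j k := by
      intro j
      by_cases hj : j = j0
      · subst hj
        have := hR j0; omega
      · rw [Finset.sum_congr rfl (fun k _ => hrow_ne j hj k),
          Finset.sum_congr rfl (fun k _ => hrow_ne' j hj k)]
        exact hR j
    have hCc : ∀ k, ∑ j, c j k = ∑ j, c' j k := by
      intro k
      by_cases hk : k = k0
      · subst hk
        have := hC k0; omega
      · rw [Finset.sum_congr rfl (fun j _ => hcol_ne k hk j),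
          Finset.sum_congr rfl (fun j _ => hcol_ne' k hk j)]
        exact hC k
    -- total of the reduced matrix
    have htot : ∑ j, ∑ k, c j k + b j0 k0 = N := by
      have h2 : ∀ j ∈ Finset.univ.erase j0, ∑ k, c j k = ∑ k, b j k := fun j hj =>
        Finset.sum_congr rfl (fun k _ => hrow_ne j (Finset.mem_erase.mp hj).1 k)
      have e1 : ∑ j, ∑ k, c j k + b j0 k0
          = (∑ j ∈ Finset.univ.erase j0, ∑ k, b j k) + ∑ k, b j0 k := by
        rw [← Finset.sum_erase_add _ (fun j => ∑ k, c j k) (Finset.mem_univ j0),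
          Finset.sum_congr rfl h2]
        omega
      rw [e1, Finset.sum_erase_add _ (fun j => ∑ k, b j k) (Finset.mem_univ j0)]
      exact hN
    have hcc' : c = c' := by
      refine ih (N - b j0 k0) (by omega) c c' (by omega) hcs hcs' hRc hCc
    funext j k
    by_cases h : j = j0 ∧ k = k0
    · rw [h.1, h.2, hbb']
    · have e1 : b j k = c j k := by simp only [hcdef]; rw [if_neg h]
      have e2 : b' j k = c' j k := by simp only [hc'def]; rw [if_neg h]
      rw [e1, e2, hcc']

end Staircase
section St16Std

lemma sum_ite_erase {α : Type*} [Fintype α] [DecidableEq α] (f : α → ℕ) (t : α) :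
    (∑ x, if t = x then 0 else f x) + f t = ∑ x, f x := by
  have h1 : ∀ x ∈ Finset.univ.erase t, (if t = x then 0 else f x) = f x := fun x hx => by
    rw [if_neg (Ne.symm (Finset.mem_erase.mp hx).1)]
  rw [← Finset.sum_erase_add Finset.univ _ (Finset.mem_univ t), if_pos rfl, add_zero,
    Finset.sum_congr rfl h1]
  exact Finset.sum_erase_add _ _ (Finset.mem_univ t)

variable (p q r : ℕ)

lemma comp_x (e : (σB p q r ⊕ σφψ p q r) →₀ ℕ) (i : Fin p) :
    sExp p q r e (Sum.inl i) + e (Sum.inr (Sum.inl i)) =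
      e (Sum.inl (Sum.inl i)) + ((∑ i', e (Sum.inr (Sum.inl i'))) +
        ∑ w : Fin q × Fin r, e (Sum.inr (Sum.inr w))) := by
  rw [sExp_apply]
  simp only [Fintype.sum_sum_type]
  simp only [wfun, mul_ite, mul_one, mul_zero, Sum.inl.injEq, Sum.inr.injEq, reduceCtorEq,
    if_false, Finset.sum_ite_eq, Finset.mem_univ, if_true, Finset.sum_const_zero, add_zero,
    zero_add]
  have := sum_ite_erase (fun i' => e (Sum.inr (Sum.inl i'))) i
  omega

lemma comp_y (e : (σB p q r ⊕ σφψ p q r) →₀ ℕ) (j : Fin q) :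
    sExp p q r e (Sum.inr (Sum.inl j)) + ∑ k', e (Sum.inr (Sum.inr (j, k'))) =
      e (Sum.inl (Sum.inr (Sum.inl j))) + ((∑ i', e (Sum.inr (Sum.inl i'))) +
        ∑ j', ∑ k', e (Sum.inr (Sum.inr (j', k')))) := by
  rw [sExp_apply]
  simp only [Fintype.sum_sum_type]
  simp only [Fintype.sum_prod_type]
  simp only [wfun, mul_ite, mul_one, mul_zero, Sum.inl.injEq, Sum.inr.injEq, reduceCtorEq,
    if_false, Finset.sum_ite_eq, Finset.mem_univ, if_true, Finset.sum_const_zero, add_zero,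
    zero_add]
  have h1 : ∀ j', (∑ k', if j = j' then (0:ℕ) else e (Sum.inr (Sum.inr (j', k')))) =
      if j = j' then 0 else ∑ k', e (Sum.inr (Sum.inr (j', k'))) := fun j' => by
    split_ifs <;> simp
  rw [Finset.sum_congr rfl fun j' _ => h1 j']
  have := sum_ite_erase (fun j' => ∑ k', e (Sum.inr (Sum.inr (j', k')))) j
  omega

lemma comp_z (e : (σB p q r ⊕ σφψ p q r) →₀ ℕ) (k : Fin r) :
    sExp p q r e (Sum.inr (Sum.inr k)) + ∑ j', e (Sum.inr (Sum.inr (j', k))) =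
      e (Sum.inl (Sum.inr (Sum.inr k))) + ((∑ i', e (Sum.inr (Sum.inl i'))) +
        ∑ j', ∑ k', e (Sum.inr (Sum.inr (j', k')))) := by
  rw [sExp_apply]
  simp only [Fintype.sum_sum_type]
  simp only [Fintype.sum_prod_type]
  simp only [wfun, mul_ite, mul_one, mul_zero, Sum.inl.injEq, Sum.inr.injEq, reduceCtorEq,
    if_false, Finset.sum_ite_eq, Finset.mem_univ, if_true, Finset.sum_const_zero, add_zero,
    zero_add]
  have h1 : ∀ j', (∑ k', if k = k' then (0:ℕ) else e (Sum.inr (Sum.inr (j', k')))) +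
      e (Sum.inr (Sum.inr (j', k))) = ∑ k', e (Sum.inr (Sum.inr (j', k'))) := fun j' =>
    sum_ite_erase (fun k' => e (Sum.inr (Sum.inr (j', k')))) k
  have h2 : (∑ j', ∑ k', if k = k' then (0:ℕ) else e (Sum.inr (Sum.inr (j', k')))) +
      ∑ j', e (Sum.inr (Sum.inr (j', k))) = ∑ j', ∑ k', e (Sum.inr (Sum.inr (j', k'))) := by
    rw [← Finset.sum_add_distrib]
    exact Finset.sum_congr rfl fun j' _ => h1 j'
  omega

lemma comp_t (e : (σB p q r ⊕ σφψ p q r) →₀ ℕ) :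
    tdeg p q r e = (∑ i', e (Sum.inr (Sum.inl i'))) +
      ∑ w : Fin q × Fin r, e (Sum.inr (Sum.inr w)) := by
  rw [tdeg_eq_sum]
  simp only [Fintype.sum_sum_type]
  simp [τ]

variable (yL : Fin q) (z0 : Fin r)

/-- `e` is a standard exponent: no generator monomial divides it. -/
def StdExp (e : (σB p q r ⊕ σφψ p q r) →₀ ℕ) : Prop :=
  (∀ i : Fin p, e (Sum.inl (Sum.inl i)) = 0 ∨ e (Sum.inr (Sum.inl i)) = 0) ∧
  (∀ (j : Fin q) (k : Fin r), j ≠ yL →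
    (e (Sum.inl (Sum.inr (Sum.inl j))) = 0 ∨ e (Sum.inr (Sum.inr (j, k))) = 0)) ∧
  (∀ (j : Fin q) (k : Fin r), k ≠ z0 →
    (e (Sum.inl (Sum.inr (Sum.inr k))) = 0 ∨ e (Sum.inr (Sum.inr (j, k))) = 0)) ∧
  (∀ (j1 j2 : Fin q) (k1 k2 : Fin r), j1 < j2 → k1 < k2 →
    (e (Sum.inr (Sum.inr (j1, k2))) = 0 ∨ e (Sum.inr (Sum.inr (j2, k1))) = 0))

lemma std_unique {e e' : (σB p q r ⊕ σφψ p q r) →₀ ℕ}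
    (hstd : StdExp p q r yL z0 e) (hstd' : StdExp p q r yL z0 e')
    (hs : sExp p q r e = sExp p q r e') (ht : tdeg p q r e = tdeg p q r e') : e = e' := by
  obtain ⟨s1, s2, s3, s4⟩ := hstd
  obtain ⟨s1', s2', s3', s4'⟩ := hstd'
  have hsv : ∀ v, sExp p q r e v = sExp p q r e' v := fun v => by rw [hs]
  have htAB : (∑ i', e (Sum.inr (Sum.inl i'))) + (∑ w : Fin q × Fin r, e (Sum.inr (Sum.inr w)))
      = (∑ i', e' (Sum.inr (Sum.inl i'))) +
        ∑ w : Fin q × Fin r, e' (Sum.inr (Sum.inr w)) := by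
    rw [← comp_t, ← comp_t, ht]
  -- x and φ components agree
  have hx : ∀ i, e (Sum.inl (Sum.inl i)) = e' (Sum.inl (Sum.inl i)) ∧
      e (Sum.inr (Sum.inl i)) = e' (Sum.inr (Sum.inl i)) := by
    intro i
    have h1 := comp_x p q r e i
    have h2 := comp_x p q r e' i
    have h3 := hsv (Sum.inl i)
    rcases s1 i with h | h <;> rcases s1' i with h' | h' <;> omega
  have hA : (∑ i', e (Sum.inr (Sum.inl i'))) = ∑ i', e' (Sum.inr (Sum.inl i')) :=
    Finset.sum_congr rfl fun i _ => (hx i).2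
  have hB : (∑ w : Fin q × Fin r, e (Sum.inr (Sum.inr w)))
      = ∑ w : Fin q × Fin r, e' (Sum.inr (Sum.inr w)) := by omega
  have hBB : (∑ w : Fin q × Fin r, e (Sum.inr (Sum.inr w)))
      = ∑ j', ∑ k', e (Sum.inr (Sum.inr (j', k'))) := Fintype.sum_prod_type _
  have hBB' : (∑ w : Fin q × Fin r, e' (Sum.inr (Sum.inr w)))
      = ∑ j', ∑ k', e' (Sum.inr (Sum.inr (j', k'))) := Fintype.sum_prod_type _
  -- rows distinct from yL
  have hrow : ∀ j, j ≠ yL → e (Sum.inl (Sum.inr (Sum.inl j))) = e' (Sum.inl (Sum.inr (Sum.inl j)))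
      ∧ (∑ k', e (Sum.inr (Sum.inr (j, k')))) = ∑ k', e' (Sum.inr (Sum.inr (j, k'))) := by
    intro j hj
    have h1 := comp_y p q r e j
    have h2 := comp_y p q r e' j
    have h3 := hsv (Sum.inr (Sum.inl j))
    have hy0 : e (Sum.inl (Sum.inr (Sum.inl j))) = 0 ∨
        (∑ k', e (Sum.inr (Sum.inr (j, k')))) = 0 := by
      rcases Nat.eq_zero_or_pos (e (Sum.inl (Sum.inr (Sum.inl j)))) with h | h
      · exact Or.inl h
      · exact Or.inr (Finset.sum_eq_zero fun k _ => (s2 j k hj).resolve_left (by omega))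
    have hy0' : e' (Sum.inl (Sum.inr (Sum.inl j))) = 0 ∨
        (∑ k', e' (Sum.inr (Sum.inr (j, k')))) = 0 := by
      rcases Nat.eq_zero_or_pos (e' (Sum.inl (Sum.inr (Sum.inl j)))) with h | h
      · exact Or.inl h
      · exact Or.inr (Finset.sum_eq_zero fun k _ => (s2' j k hj).resolve_left (by omega))
    rcases hy0 with h | h <;> rcases hy0' with h' | h' <;> omega
  -- row yL
  have hrowL : (∑ k', e (Sum.inr (Sum.inr (yL, k')))) =
      ∑ k', e' (Sum.inr (Sum.inr (yL, k'))) := by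
    have e1 : (∑ j ∈ Finset.univ.erase yL, ∑ k', e (Sum.inr (Sum.inr (j, k')))) +
        (∑ k', e (Sum.inr (Sum.inr (yL, k')))) =
        ∑ j', ∑ k', e (Sum.inr (Sum.inr (j', k'))) :=
      Finset.sum_erase_add _ _ (Finset.mem_univ yL)
    have e2 : (∑ j ∈ Finset.univ.erase yL, ∑ k', e' (Sum.inr (Sum.inr (j, k')))) +
        (∑ k', e' (Sum.inr (Sum.inr (yL, k')))) =
        ∑ j', ∑ k', e' (Sum.inr (Sum.inr (j', k'))) :=
      Finset.sum_erase_add _ _ (Finset.mem_univ yL)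
    have e3 : (∑ j ∈ Finset.univ.erase yL, ∑ k', e (Sum.inr (Sum.inr (j, k')))) =
        ∑ j ∈ Finset.univ.erase yL, ∑ k', e' (Sum.inr (Sum.inr (j, k'))) :=
      Finset.sum_congr rfl fun j hj => (hrow j (Finset.mem_erase.mp hj).1).2
    omega
  have hyy : ∀ j, e (Sum.inl (Sum.inr (Sum.inl j))) = e' (Sum.inl (Sum.inr (Sum.inl j))) ∧
      (∑ k', e (Sum.inr (Sum.inr (j, k')))) = ∑ k', e' (Sum.inr (Sum.inr (j, k'))) := by
    intro j
    by_cases hj : j = yL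
    · subst hj
      refine ⟨?_, hrowL⟩
      have h1 := comp_y p q r e j
      have h2 := comp_y p q r e' j
      have h3 := hsv (Sum.inr (Sum.inl j))
      omega
    · exact hrow j hj
  -- columns distinct from z0
  have hcol : ∀ k, k ≠ z0 → e (Sum.inl (Sum.inr (Sum.inr k))) = e' (Sum.inl (Sum.inr (Sum.inr k)))
      ∧ (∑ j', e (Sum.inr (Sum.inr (j', k)))) = ∑ j', e' (Sum.inr (Sum.inr (j', k))) := by
    intro k hk
    have h1 := comp_z p q r e k
    have h2 := comp_z p q r e' k
    have h3 := hsv (Sum.inr (Sum.inr k))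
    have hz0 : e (Sum.inl (Sum.inr (Sum.inr k))) = 0 ∨
        (∑ j', e (Sum.inr (Sum.inr (j', k)))) = 0 := by
      rcases Nat.eq_zero_or_pos (e (Sum.inl (Sum.inr (Sum.inr k)))) with h | h
      · exact Or.inl h
      · exact Or.inr (Finset.sum_eq_zero fun j _ => (s3 j k hk).resolve_left (by omega))
    have hz0' : e' (Sum.inl (Sum.inr (Sum.inr k))) = 0 ∨
        (∑ j', e' (Sum.inr (Sum.inr (j', k)))) = 0 := by
      rcases Nat.eq_zero_or_pos (e' (Sum.inl (Sum.inr (Sum.inr k)))) with h | h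
      · exact Or.inl h
      · exact Or.inr (Finset.sum_eq_zero fun j _ => (s3' j k hk).resolve_left (by omega))
    rcases hz0 with h | h <;> rcases hz0' with h' | h' <;> omega
  have hCtot : (∑ k', ∑ j', e (Sum.inr (Sum.inr (j', k')))) =
      ∑ j', ∑ k', e (Sum.inr (Sum.inr (j', k'))) := Finset.sum_comm
  have hCtot' : (∑ k', ∑ j', e' (Sum.inr (Sum.inr (j', k')))) =
      ∑ j', ∑ k', e' (Sum.inr (Sum.inr (j', k'))) := Finset.sum_comm
  have hcolL : (∑ j', e (Sum.inr (Sum.inr (j', z0)))) =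
      ∑ j', e' (Sum.inr (Sum.inr (j', z0))) := by
    have e1 : (∑ k ∈ Finset.univ.erase z0, ∑ j', e (Sum.inr (Sum.inr (j', k)))) +
        (∑ j', e (Sum.inr (Sum.inr (j', z0)))) =
        ∑ k', ∑ j', e (Sum.inr (Sum.inr (j', k'))) :=
      Finset.sum_erase_add _ _ (Finset.mem_univ z0)
    have e2 : (∑ k ∈ Finset.univ.erase z0, ∑ j', e' (Sum.inr (Sum.inr (j', k)))) +
        (∑ j', e' (Sum.inr (Sum.inr (j', z0)))) =
        ∑ k', ∑ j', e' (Sum.inr (Sum.inr (j', k'))) :=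
      Finset.sum_erase_add _ _ (Finset.mem_univ z0)
    have e3 : (∑ k ∈ Finset.univ.erase z0, ∑ j', e (Sum.inr (Sum.inr (j', k)))) =
        ∑ k ∈ Finset.univ.erase z0, ∑ j', e' (Sum.inr (Sum.inr (j', k))) :=
      Finset.sum_congr rfl fun k hk => (hcol k (Finset.mem_erase.mp hk).1).2
    omega
  have hzz : ∀ k, e (Sum.inl (Sum.inr (Sum.inr k))) = e' (Sum.inl (Sum.inr (Sum.inr k))) ∧
      (∑ j', e (Sum.inr (Sum.inr (j', k)))) = ∑ j', e' (Sum.inr (Sum.inr (j', k))) := by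
    intro k
    by_cases hk : k = z0
    · subst hk
      refine ⟨?_, hcolL⟩
      have h1 := comp_z p q r e k
      have h2 := comp_z p q r e' k
      have h3 := hsv (Sum.inr (Sum.inr k))
      omega
    · exact hcol k hk
  -- the ψ matrix agrees
  have hmat : (fun j k => e (Sum.inr (Sum.inr (j, k)))) =
      (fun j k => e' (Sum.inr (Sum.inr (j, k)))) := by
    refine stair_unique (∑ j', ∑ k', e (Sum.inr (Sum.inr (j', k')))) _ _ rfl
      (fun j1 j2 k1 k2 h1 h2 => s4 j1 j2 k1 k2 h1 h2)
      (fun j1 j2 k1 k2 h1 h2 => s4' j1 j2 k1 k2 h1 h2)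
      (fun j => (hyy j).2) (fun k => (hzz k).2)
  ext u
  rcases u with (a | (bj | ck)) | (i | ⟨j, k⟩)
  · exact (hx a).1
  · exact (hyy bj).1
  · exact (hzz ck).1
  · exact (hx i).2
  · exact congrFun (congrFun hmat j) k

end St16Std
section St16Main

variable (K : Type) [Field K] (p q r : ℕ) (yL : Fin q) (z0 : Fin r)

lemma pair_le_iff {σ' : Type} [DecidableEq σ'] {a b : σ'} (hab : a ≠ b) (e : σ' →₀ ℕ) :
    Finsupp.single a 1 + Finsupp.single b 1 ≤ e ↔ 1 ≤ e a ∧ 1 ≤ e b := by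
  rw [Finsupp.le_def]
  constructor
  · intro h
    constructor
    · have := h a
      simpa [Finsupp.add_apply, Finsupp.single_apply, hab, Ne.symm hab] using this
    · have := h b
      simpa [Finsupp.add_apply, Finsupp.single_apply, hab, Ne.symm hab] using this
  · rintro ⟨h1, h2⟩ s
    rw [Finsupp.add_apply, Finsupp.single_apply, Finsupp.single_apply]
    by_cases hs1 : a = s
    · subst hs1
      rw [if_pos rfl, if_neg (Ne.symm hab)]
      omega
    · by_cases hs2 : b = s
      · subst hs2
        rw [if_neg hs1, if_pos rfl]
        omega
      · rw [if_neg hs1, if_neg hs2]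
        omega

/-- The set of generating exponents. -/
def GenSet : Set ((σB p q r ⊕ σφψ p q r) →₀ ℕ) :=
  {c | (∃ i : Fin p, c = cX p q r i) ∨
       (∃ (j : Fin q) (k : Fin r), j ≠ yL ∧ c = cY p q r j k) ∨
       (∃ (j : Fin q) (k : Fin r), k ≠ z0 ∧ c = cZ p q r j k) ∨
       (∃ (j₁ j₂ : Fin q) (k₁ k₂ : Fin r), j₁ < j₂ ∧ k₁ < k₂ ∧ c = cP p q r j₁ j₂ k₁ k₂)}

lemma not_std_exists {e : (σB p q r ⊕ σφψ p q r) →₀ ℕ} (h : ¬ StdExp p q r yL z0 e) :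
    ∃ c ∈ GenSet p q r yL z0, c ≤ e := by
  by_contra hc
  push_neg at hc
  apply h
  refine ⟨?_, ?_, ?_, ?_⟩
  · intro i
    rcases Nat.eq_zero_or_pos (e (Sum.inl (Sum.inl i))) with h0 | h0
    · exact Or.inl h0
    · right
      by_contra hb
      exact absurd ((pair_le_iff (by simp) e).mpr ⟨h0, by omega⟩)
        (hc _ (Or.inl ⟨i, rfl⟩))
  · intro j k hj
    rcases Nat.eq_zero_or_pos (e (Sum.inl (Sum.inr (Sum.inl j)))) with h0 | h0
    · exact Or.inl h0
    · right
      by_contra hb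
      exact absurd ((pair_le_iff (by simp) e).mpr ⟨h0, by omega⟩)
        (hc _ (Or.inr (Or.inl ⟨j, k, hj, rfl⟩)))
  · intro j k hk
    rcases Nat.eq_zero_or_pos (e (Sum.inl (Sum.inr (Sum.inr k)))) with h0 | h0
    · exact Or.inl h0
    · right
      by_contra hb
      exact absurd ((pair_le_iff (by simp) e).mpr ⟨h0, by omega⟩)
        (hc _ (Or.inr (Or.inr (Or.inl ⟨j, k, hk, rfl⟩))))
  · intro j1 j2 k1 k2 hj hk
    rcases Nat.eq_zero_or_pos (e (Sum.inr (Sum.inr (j1, k2)))) with h0 | h0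
    · exact Or.inl h0
    · right
      by_contra hb
      have hne : (Sum.inr (Sum.inr (j1, k2)) : σB p q r ⊕ σφψ p q r) ≠
          Sum.inr (Sum.inr (j2, k1)) := by
        simp only [ne_eq, Sum.inr.injEq, Prod.mk.injEq, not_and]
        intro h' _
        exact absurd (h' ▸ hj) (lt_irrefl _)
      exact absurd ((pair_le_iff hne e).mpr ⟨h0, by omega⟩)
        (hc _ (Or.inr (Or.inr (Or.inr ⟨j1, j2, k1, k2, hj, hk, rfl⟩))))

variable (ord : MonomialOrder (σB p q r ⊕ σφψ p q r))

lemma reduce_step {c d e : (σB p q r ⊕ σφψ p q r) →₀ ℕ} (hce : c ≤ e)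
    (h1 : sExp p q r c = sExp p q r d) (h2 : tdeg p q r c = tdeg p q r d)
    (h3 : ord.toSyn d < ord.toSyn c) :
    sExp p q r (e - c + d) = sExp p q r e ∧ tdeg p q r (e - c + d) = tdeg p q r e ∧
      ord.toSyn (e - c + d) < ord.toSyn e := by
  have hec : e - c + c = e := tsub_add_cancel_of_le hce
  refine ⟨?_, ?_, ?_⟩
  · conv_rhs => rw [← hec]
    rw [sExp_add, sExp_add, h1]
  · conv_rhs => rw [← hec]
    rw [tdeg_add, tdeg_add, h2]
  · conv_rhs => rw [← hec]
    rw [map_add, map_add]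
    exact add_lt_add_of_le_of_lt le_rfl h3

variable (hord : ∀ c d : (σB p q r ⊕ σφψ p q r) →₀ ℕ,
      ord.toSyn c < ord.toSyn d ↔
        (lexLt (prioPhiPsi p q r) (yPart c) (yPart d) ∨
          (yPart c = yPart d ∧ lexLt (prioXYZ p q r) (xPart c) (xPart d))))
variable (hyL : ∀ j : Fin q, j ≠ yL → j < yL) (hz0 : ∀ k : Fin r, k ≠ z0 → z0 < k)

include hord hyL hz0 in
lemma reduce_nonstd {e : (σB p q r ⊕ σφψ p q r) →₀ ℕ} (h : ¬ StdExp p q r yL z0 e) :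
    ∃ e'', sExp p q r e'' = sExp p q r e ∧ tdeg p q r e'' = tdeg p q r e ∧
      ord.toSyn e'' < ord.toSyn e := by
  obtain ⟨c, hcmem, hce⟩ := not_std_exists p q r yL z0 h
  rcases hcmem with ⟨i, rfl⟩ | ⟨j, k, hj, rfl⟩ | ⟨j, k, hk, rfl⟩ |
    ⟨j1, j2, k1, k2, hj, hk, rfl⟩
  · exact ⟨_, reduce_step p q r ord hce (fiber_X p q r yL z0 i).1 (fiber_X p q r yL z0 i).2
      (lt_X ord hord yL z0 i)⟩
  · exact ⟨_, reduce_step p q r ord hce (fiber_Y p q r yL j k).1 (fiber_Y p q r yL j k).2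
      (lt_Y ord hord yL j k (hyL j hj))⟩
  · exact ⟨_, reduce_step p q r ord hce (fiber_Z p q r z0 j k).1 (fiber_Z p q r z0 j k).2
      (lt_Z ord hord z0 j k (hz0 k hk))⟩
  · exact ⟨_, reduce_step p q r ord hce (fiber_P p q r j1 j2 k1 k2).1
      (fiber_P p q r j1 j2 k1 k2).2 (lt_P ord hord j1 j2 k1 k2 hj hk)⟩

include hord hyL hz0 in
lemma std_min {e : (σB p q r ⊕ σφψ p q r) →₀ ℕ} (hstd : StdExp p q r yL z0 e) :
    ∀ e', sExp p q r e' = sExp p q r e → tdeg p q r e' = tdeg p q r e → e' ≠ e →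
      ord.toSyn e < ord.toSyn e' := by
  have hwf : WellFounded ((· < ·) : ord.syn → ord.syn → Prop) := ord.wf.wf
  have H : ∀ s : ord.syn, ∀ e', ord.toSyn e' = s → sExp p q r e' = sExp p q r e →
      tdeg p q r e' = tdeg p q r e → e' ≠ e → ord.toSyn e < ord.toSyn e' := by
    intro s
    refine hwf.induction (C := fun s => ∀ e', ord.toSyn e' = s →
      sExp p q r e' = sExp p q r e → tdeg p q r e' = tdeg p q r e → e' ≠ e →
      ord.toSyn e < ord.toSyn e') s ?_
    rintro s ih e' rfl hs1 ht1 hne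
    by_cases hstd' : StdExp p q r yL z0 e'
    · exact absurd (std_unique p q r yL z0 hstd' hstd hs1 ht1) hne
    · obtain ⟨e'', h1, h2, h3⟩ := reduce_nonstd p q r yL z0 ord hord hyL hz0 hstd'
      by_cases he : e'' = e
      · rw [← he]
        exact h3
      · exact lt_trans (ih (ord.toSyn e'') h3 e'' rfl (h1.trans hs1) (h2.trans ht1) he) h3
  exact fun e' hs1 ht1 hne => H (ord.toSyn e') e' rfl hs1 ht1 hne

lemma binom_ne_zero {c d : (σB p q r ⊕ σφψ p q r) →₀ ℕ} (hdc : d ≠ c) :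
    (monomial c (1 : K) - monomial d 1 : TB K p q r) ≠ 0 := by
  intro h0
  have h1 : MvPolynomial.coeff c (monomial c (1 : K) - monomial d 1 : TB K p q r) = 1 := by
    rw [MvPolynomial.coeff_sub, MvPolynomial.coeff_monomial, MvPolynomial.coeff_monomial,
      if_pos rfl, if_neg hdc, sub_zero]
  rw [h0, MvPolynomial.coeff_zero] at h1
  exact one_ne_zero h1.symm

lemma mono_mem_inIdeal {c d : (σB p q r ⊕ σφψ p q r) →₀ ℕ}
    (h1 : sExp p q r c = sExp p q r d) (h2 : tdeg p q r c = tdeg p q r d)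
    (h3 : ord.toSyn d < ord.toSyn c) :
    (monomial c (1 : K) : TB K p q r) ∈ inIdeal ord (JB K p q r) := by
  have hdc : d ≠ c := fun hdc => absurd (hdc ▸ h3) (lt_irrefl _)
  apply Ideal.subset_span
  exact ⟨monomial c (1 : K) - monomial d 1,
    ⟨mem_JB_of_fiber K p q r h1 h2, binom_ne_zero K p q r hdc⟩,
    by simp only [leadExp_binomial ord h3]⟩

include hord hyL hz0 in
lemma initial_ideal_eq :
    inIdeal ord (JB K p q r) =
      Ideal.span ((fun c => (monomial c (1 : K) : TB K p q r)) '' GenSet p q r yL z0) := by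
  apply le_antisymm
  · rw [inIdeal, Ideal.span_le]
    rintro _ ⟨f, ⟨hfJ, hf0⟩, rfl⟩
    have hLsupp : leadExp ord f ∈ f.support := leadExp_mem_support ord hf0
    obtain ⟨e', he's, he'ne, he'fib1, he'fib2⟩ := exists_partner K p q r hfJ hLsupp
    have hlt : ord.toSyn e' < ord.toSyn (leadExp ord f) :=
      lt_of_le_of_ne (le_toSyn_leadExp ord he's) (fun h => he'ne (ord.toSyn.injective h))
    have hnstd : ¬ StdExp p q r yL z0 (leadExp ord f) := fun hstd =>
      absurd (std_min p q r yL z0 ord hord hyL hz0 hstd e' he'fib1 he'fib2 he'ne)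
        (not_lt.mpr (le_of_lt hlt))
    obtain ⟨c, hcmem, hcle⟩ := not_std_exists p q r yL z0 hnstd
    have hsplit : (monomial (leadExp ord f) (1 : K) : TB K p q r) =
        monomial (leadExp ord f - c) 1 * monomial c 1 := by
      rw [monomial_mul, one_mul, tsub_add_cancel_of_le hcle]
    simp only [SetLike.mem_coe]
    rw [hsplit]
    exact Ideal.mul_mem_left _ _ (Ideal.subset_span ⟨c, hcmem, rfl⟩)
  · rw [Ideal.span_le]
    rintro _ ⟨c, hcmem, rfl⟩
    simp only [SetLike.mem_coe]
    rcases hcmem with ⟨i, rfl⟩ | ⟨j, k, hj, rfl⟩ | ⟨j, k, hk, rfl⟩ |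
      ⟨j1, j2, k1, k2, hj, hk, rfl⟩
    · exact mono_mem_inIdeal K p q r ord (fiber_X p q r yL z0 i).1 (fiber_X p q r yL z0 i).2
        (lt_X ord hord yL z0 i)
    · exact mono_mem_inIdeal K p q r ord (fiber_Y p q r yL j k).1 (fiber_Y p q r yL j k).2
        (lt_Y ord hord yL j k (hyL j hj))
    · exact mono_mem_inIdeal K p q r ord (fiber_Z p q r z0 j k).1 (fiber_Z p q r z0 j k).2
        (lt_Z ord hord z0 j k (hz0 k hk))
    · exact mono_mem_inIdeal K p q r ord (fiber_P p q r j1 j2 k1 k2).1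
        (fiber_P p q r j1 j2 k1 k2).2 (lt_P ord hord j1 j2 k1 k2 hj hk)

lemma gen_xdeg_le {c : (σB p q r ⊕ σφψ p q r) →₀ ℕ} (hc : c ∈ GenSet p q r yL z0) :
    (∑ v : σB p q r, c (Sum.inl v)) ≤ 1 := by
  have hsingle : ∀ (w : σB p q r) (u : σφψ p q r),
      (∑ v : σB p q r, (Finsupp.single (Sum.inl w : σB p q r ⊕ σφψ p q r) 1 +
        Finsupp.single (Sum.inr u) 1 : (σB p q r ⊕ σφψ p q r) →₀ ℕ) (Sum.inl v)) = 1 := by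
    intro w u
    simp [Finsupp.add_apply, Finsupp.single_apply, Finset.sum_ite_eq]
  rcases hc with ⟨i, rfl⟩ | ⟨j, k, hj, rfl⟩ | ⟨j, k, hk, rfl⟩ |
    ⟨j1, j2, k1, k2, hj, hk, rfl⟩
  · rw [cX, hsingle]
  · rw [cY, hsingle]
  · rw [cZ, hsingle]
  · rw [cP]
    simp [Finsupp.add_apply, Finsupp.single_apply]

lemma X_mul_X_eq (u v : σB p q r ⊕ σφψ p q r) :
    (X u * X v : TB K p q r) = monomial (Finsupp.single u 1 + Finsupp.single v 1) 1 := by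
  rw [show (X u : TB K p q r) = monomial (Finsupp.single u 1) 1 by
      rw [← pow_one (X u), X_pow_eq_monomial],
    show (X v : TB K p q r) = monomial (Finsupp.single v 1) 1 by
      rw [← pow_one (X v), X_pow_eq_monomial],
    monomial_mul, one_mul]

lemma X_mul_X_mul_X_eq (u v w : σB p q r ⊕ σφψ p q r) :
    (X u * X v * X w : TB K p q r) =
      monomial (Finsupp.single u 1 + (Finsupp.single v 1 + Finsupp.single w 1)) 1 := by
  rw [X_mul_X_eq, show (X w : TB K p q r) = monomial (Finsupp.single w 1) 1 by
      rw [← pow_one (X w), X_pow_eq_monomial], monomial_mul, one_mul, add_assoc]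

end St16Main
/-- The toric ideal of the Rees algebra of the vertex cover ideal of the
biclique graph `Γ_{p,q,r}` has a quadratic Gröbner basis with respect to the described order:
the listed binomials lie in `J`, the initial ideal is generated by the listed quadratic
monomials, and in particular `J` satisfies the x-condition. -/
theorem statement16 (K : Type) [Field K] (p q r : ℕ)
    (hp : 0 < p) (hq : 0 < q) (hr : 0 < r)
    (ord : MonomialOrder (σB p q r ⊕ σφψ p q r))
    (hord : ∀ c d : (σB p q r ⊕ σφψ p q r) →₀ ℕ,
      ord.toSyn c < ord.toSyn d ↔
        (lexLt (prioPhiPsi p q r) (yPart c) (yPart d) ∨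
          (yPart c = yPart d ∧ lexLt (prioXYZ p q r) (xPart c) (xPart d)))) :
    let yL : Fin q := ⟨q - 1, by omega⟩
    let z0 : Fin r := ⟨0, hr⟩
    let xv : σB p q r → TB K p q r := fun v => X (Sum.inl v)
    let φv : Fin p → TB K p q r := fun i => X (Sum.inr (Sum.inl i))
    let ψv : Fin q × Fin r → TB K p q r := fun jk => X (Sum.inr (Sum.inr jk))
    -- the Gröbner basis binomials lie in `J`
    (∀ i : Fin p,
      xv (Sum.inl i) * φv i -
        xv (Sum.inr (Sum.inl yL)) * xv (Sum.inr (Sum.inr z0)) * ψv (yL, z0) ∈ JB K p q r) ∧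
    (∀ (j : Fin q) (k : Fin r), j ≠ yL →
      xv (Sum.inr (Sum.inl j)) * ψv (j, k) -
        xv (Sum.inr (Sum.inl yL)) * ψv (yL, k) ∈ JB K p q r) ∧
    (∀ (j : Fin q) (k : Fin r), k ≠ z0 →
      xv (Sum.inr (Sum.inr k)) * ψv (j, k) -
        xv (Sum.inr (Sum.inr z0)) * ψv (j, z0) ∈ JB K p q r) ∧
    (∀ (j₁ j₂ : Fin q) (k₁ k₂ : Fin r), j₁ < j₂ → k₁ < k₂ →
      ψv (j₁, k₂) * ψv (j₂, k₁) - ψv (j₁, k₁) * ψv (j₂, k₂) ∈ JB K p q r) ∧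
    -- the initial ideal is generated by the corresponding quadratic monomials
    inIdeal ord (JB K p q r) =
      Ideal.span ((fun c => (monomial c (1 : K) : TB K p q r)) ''
        {c | (∃ i : Fin p,
                c = Finsupp.single (Sum.inl (Sum.inl i)) 1 +
                    Finsupp.single (Sum.inr (Sum.inl i)) 1) ∨
             (∃ (j : Fin q) (k : Fin r), j ≠ yL ∧
                c = Finsupp.single (Sum.inl (Sum.inr (Sum.inl j))) 1 +
                    Finsupp.single (Sum.inr (Sum.inr (j, k))) 1) ∨
             (∃ (j : Fin q) (k : Fin r), k ≠ z0 ∧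
                c = Finsupp.single (Sum.inl (Sum.inr (Sum.inr k))) 1 +
                    Finsupp.single (Sum.inr (Sum.inr (j, k))) 1) ∨
             (∃ (j₁ j₂ : Fin q) (k₁ k₂ : Fin r), j₁ < j₂ ∧ k₁ < k₂ ∧
                c = Finsupp.single (Sum.inr (Sum.inr (j₁, k₂))) 1 +
                    Finsupp.single (Sum.inr (Sum.inr (j₂, k₁))) 1)}) ∧
    -- in particular, `J` satisfies the x-condition
    XCondition ord (JB K p q r) := by
  intro yL z0 xv φv ψv
  have hyL : ∀ j : Fin q, j ≠ yL → j < yL := by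
    intro j hj
    have h1 : (j : ℕ) ≠ q - 1 := fun h => hj (Fin.ext h)
    have h2 := j.isLt
    exact Fin.lt_def.mpr (show (j : ℕ) < q - 1 by omega)
  have hz0 : ∀ k : Fin r, k ≠ z0 → z0 < k := by
    intro k hk
    have h1 : (k : ℕ) ≠ 0 := fun h => hk (Fin.ext h)
    exact Fin.lt_def.mpr (show (0 : ℕ) < (k : ℕ) by omega)
  refine ⟨?_, ?_, ?_, ?_, ?_, ?_⟩
  · intro i
    rw [show xv (Sum.inl i) * φv i = monomial (cX p q r i) (1 : K) from
        X_mul_X_eq K p q r _ _,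
      show xv (Sum.inr (Sum.inl yL)) * xv (Sum.inr (Sum.inr z0)) * ψv (yL, z0) =
        monomial (dX p q r yL z0) (1 : K) from X_mul_X_mul_X_eq K p q r _ _ _]
    exact mem_JB_of_fiber K p q r (fiber_X p q r yL z0 i).1 (fiber_X p q r yL z0 i).2
  · intro j k hj
    rw [show xv (Sum.inr (Sum.inl j)) * ψv (j, k) = monomial (cY p q r j k) (1 : K) from
        X_mul_X_eq K p q r _ _,
      show xv (Sum.inr (Sum.inl yL)) * ψv (yL, k) = monomial (dY p q r yL k) (1 : K) from
        X_mul_X_eq K p q r _ _]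
    exact mem_JB_of_fiber K p q r (fiber_Y p q r yL j k).1 (fiber_Y p q r yL j k).2
  · intro j k hk
    rw [show xv (Sum.inr (Sum.inr k)) * ψv (j, k) = monomial (cZ p q r j k) (1 : K) from
        X_mul_X_eq K p q r _ _,
      show xv (Sum.inr (Sum.inr z0)) * ψv (j, z0) = monomial (dZ p q r z0 j) (1 : K) from
        X_mul_X_eq K p q r _ _]
    exact mem_JB_of_fiber K p q r (fiber_Z p q r z0 j k).1 (fiber_Z p q r z0 j k).2
  · intro j₁ j₂ k₁ k₂ hj hk
    rw [show ψv (j₁, k₂) * ψv (j₂, k₁) = monomial (cP p q r j₁ j₂ k₁ k₂) (1 : K) from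
        X_mul_X_eq K p q r _ _,
      show ψv (j₁, k₁) * ψv (j₂, k₂) = monomial (dP p q r j₁ j₂ k₁ k₂) (1 : K) from
        X_mul_X_eq K p q r _ _]
    exact mem_JB_of_fiber K p q r (fiber_P p q r j₁ j₂ k₁ k₂).1 (fiber_P p q r j₁ j₂ k₁ k₂).2
  · exact initial_ideal_eq K p q r yL z0 ord hord hyL hz0
  · exact ⟨GenSet p q r yL z0, fun c hc => gen_xdeg_le p q r yL z0 hc,
      initial_ideal_eq K p q r yL z0 ord hord hyL hz0⟩

end Paper
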